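/- Convexity of the fronthaul constraint set: for fixed Hermitian PSD S, σ² > 0, η ∈ (0,1), C₀ > 0, the set of diagonal positive definite L×L matrices Ψ satisfying log det(S + Ψ + σ²I) − log det(Ψ) ≤ ((1−η)/η)·C₀·log 2 is convex. -/

import Mathlib

open Matrix ComplexOrder


open Matrix ComplexOrder Finset

variable {n : Type*} [Fintype n] [DecidableEq n]

/-- Expansion of `det (M + diagonal d)` by multilinearity in the rows. -/
theorem my_det_add_diagonal (M : Matrix n n ℂ) (d : n → ℂ) :
    (M + diagonal d).det =
      ∑ U : Finset n, (∏ l ∈ U, d l) * (Matrix.of (U.piecewise (1 : Matrix n n ℂ) M)).det := by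
  classical
  have h0 : (M + diagonal d).det
      = (detRowAlternating : (n → ℂ) [⋀^n]→ₗ[ℂ] ℂ).toMultilinearMap
          ((fun i => diagonal d i) + (fun i => M i)) := by
    congr 1
    ext i j
    simp [add_comm]
  rw [h0, MultilinearMap.map_add_univ]
  refine Finset.sum_congr rfl fun U _ => ?_
  have h1 : U.piecewise (fun i => diagonal d i) (fun i => M i)
      = U.piecewise (fun i => d i • (U.piecewise (1 : Matrix n n ℂ) M) i)
          (U.piecewise (1 : Matrix n n ℂ) M) := by
    ext i j
    by_cases hi : i ∈ U
    · simp [Finset.piecewise, hi, diagonal, Matrix.one_apply, mul_ite]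
    · simp [Finset.piecewise, hi]
  rw [h1, MultilinearMap.map_piecewise_smul]
  rfl

/-- The coefficient matrices have nonnegative real determinant when `M` is PSD. -/
theorem my_coef_nonneg {M : Matrix n n ℂ} (hM : M.PosSemidef) (U : Finset n) :
    ∃ r : ℝ, 0 ≤ r ∧ (Matrix.of (U.piecewise (1 : Matrix n n ℂ) M)).det = (r : ℂ) := by
  classical
  let e : {i // i ∈ U} ⊕ {i // ¬ i ∈ U} ≃ n := Equiv.sumCompl (· ∈ U)
  have hsub : ((Matrix.of (U.piecewise (1 : Matrix n n ℂ) M)).submatrix e e) =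
      fromBlocks 1 0 (Matrix.of fun (i : {i // ¬ i ∈ U}) (j : {i // i ∈ U}) => M i.1 j.1)
        (M.submatrix Subtype.val Subtype.val) := by
    ext i j
    cases' i with i i <;> cases' j with j j
    · have : (i : n) ∈ U := i.2
      simp only [submatrix_apply, fromBlocks_apply₁₁, e, Equiv.sumCompl_apply_inl]
      rw [Matrix.of_apply]; simp only [Finset.piecewise, this, ↓reduceIte]
      rw [Matrix.one_apply, Matrix.one_apply]; simp only [Subtype.ext_iff]
    · have hi : (i : n) ∈ U := i.2
      simp only [submatrix_apply, fromBlocks_apply₁₂, e, Equiv.sumCompl_apply_inl,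
        Equiv.sumCompl_apply_inr]
      rw [Matrix.of_apply]; simp only [Finset.piecewise, hi, ↓reduceIte]
      have : (i : n) ≠ (j : n) := fun h => j.2 (h ▸ hi)
      simp [Matrix.one_apply, this]
    · have hi : ¬ (i : n) ∈ U := i.2
      simp only [submatrix_apply, fromBlocks_apply₂₁, e, Equiv.sumCompl_apply_inl,
        Equiv.sumCompl_apply_inr]
      rw [Matrix.of_apply]; simp only [Finset.piecewise, hi, ↓reduceIte]
      rfl
    · have hi : ¬ (i : n) ∈ U := i.2
      simp only [submatrix_apply, fromBlocks_apply₂₂, e, Equiv.sumCompl_apply_inr]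
      rw [Matrix.of_apply]; simp only [Finset.piecewise, hi, ↓reduceIte]
  have hdet : (Matrix.of (U.piecewise (1 : Matrix n n ℂ) M)).det
      = (M.submatrix (Subtype.val : {i // ¬ i ∈ U} → n) Subtype.val).det := by
    rw [← Matrix.det_submatrix_equiv_self e, hsub, Matrix.det_fromBlocks_zero₁₂, det_one, one_mul]
  have hpsd : (M.submatrix (Subtype.val : {i // ¬ i ∈ U} → n) Subtype.val).PosSemidef :=
    hM.submatrix _
  refine ⟨∏ i, hpsd.1.eigenvalues i, Finset.prod_nonneg fun i _ => hpsd.eigenvalues_nonneg i, ?_⟩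
  rw [hdet, hpsd.1.det_eq_prod_eigenvalues]
  push_cast
  rfl

open Real in
theorem my_core_convexOn {ι : Type*} [Fintype ι] [DecidableEq ι]
    (r : Finset ι → ℝ) (hr : ∀ U, 0 ≤ r U)
    (hpos : ∀ ψ : ι → ℝ, (∀ l, 0 < ψ l) →
      0 < ∑ U : Finset ι, r U * ∏ l ∈ Uᶜ, (ψ l)⁻¹) :
    ConvexOn ℝ {ψ : ι → ℝ | ∀ l, 0 < ψ l}
      (fun ψ => Real.log (∑ U : Finset ι, r U * ∏ l ∈ Uᶜ, (ψ l)⁻¹)) := by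
  classical
  set T : (ι → ℝ) → ℝ := fun ψ => ∑ U : Finset ι, r U * ∏ l ∈ Uᶜ, (ψ l)⁻¹ with hT
  have hconv : Convex ℝ {ψ : ι → ℝ | ∀ l, 0 < ψ l} := by
    have : {ψ : ι → ℝ | ∀ l, 0 < ψ l} = Set.pi Set.univ (fun _ : ι => Set.Ioi (0:ℝ)) := by
      ext ψ; simp [Set.mem_pi]
    rw [this]; exact convex_pi fun i _ => convex_Ioi 0
  refine ⟨hconv, ?_⟩
  intro ψ hψ φ hφ a b ha hb hab
  rcases eq_or_lt_of_le ha with rfl | ha'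
  · have hb1 : b = 1 := by linarith
    subst hb1; simp
  rcases eq_or_lt_of_le hb with rfl | hb'
  · have ha1 : a = 1 := by linarith
    subst ha1; simp
  have hψ' : ∀ l, 0 < ψ l := hψ
  have hφ' : ∀ l, 0 < φ l := hφ
  have hz : ∀ l, 0 < (a • ψ + b • φ) l := fun l => by
    have h1 := hψ' l; have h2 := hφ' l
    simp only [Pi.add_apply, Pi.smul_apply, smul_eq_mul]
    positivity
  -- pointwise AM-GM
  have step1 : ∀ U : Finset ι,
      (∏ l ∈ Uᶜ, ((a • ψ + b • φ) l)⁻¹) ≤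
        (∏ l ∈ Uᶜ, (ψ l)⁻¹) ^ a * (∏ l ∈ Uᶜ, (φ l)⁻¹) ^ b := by
    intro U
    have h1 : (∏ l ∈ Uᶜ, ((a • ψ + b • φ) l)⁻¹) ≤
        ∏ l ∈ Uᶜ, ((ψ l)⁻¹ ^ a * (φ l)⁻¹ ^ b) := by
      refine Finset.prod_le_prod (fun l _ => by have := hz l; positivity) (fun l _ => ?_)
      have hgm : (ψ l) ^ a * (φ l) ^ b ≤ a * ψ l + b * φ l :=
        Real.geom_mean_le_arith_mean2_weighted ha'.le hb'.le (hψ' l).le (hφ' l).le hab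
      have hgm0 : (0:ℝ) < (ψ l) ^ a * (φ l) ^ b := by
        have := hψ' l; have := hφ' l; positivity
      have hle : ((a • ψ + b • φ) l)⁻¹ ≤ ((ψ l) ^ a * (φ l) ^ b)⁻¹ := by
        apply inv_anti₀ hgm0
        simpa [Pi.add_apply, Pi.smul_apply, smul_eq_mul] using hgm
      calc ((a • ψ + b • φ) l)⁻¹ ≤ ((ψ l) ^ a * (φ l) ^ b)⁻¹ := hle
        _ = (ψ l)⁻¹ ^ a * (φ l)⁻¹ ^ b := by
            rw [mul_inv, Real.inv_rpow (hψ' l).le, Real.inv_rpow (hφ' l).le]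
    calc (∏ l ∈ Uᶜ, ((a • ψ + b • φ) l)⁻¹) ≤ ∏ l ∈ Uᶜ, ((ψ l)⁻¹ ^ a * (φ l)⁻¹ ^ b) := h1
      _ = (∏ l ∈ Uᶜ, (ψ l)⁻¹) ^ a * (∏ l ∈ Uᶜ, (φ l)⁻¹) ^ b := by
          rw [Finset.prod_mul_distrib,
            Real.finset_prod_rpow _ _ (fun l _ => by have := hψ' l; positivity) a,
            Real.finset_prod_rpow _ _ (fun l _ => by have := hφ' l; positivity) b]
  -- Hölder
  have hxnn : ∀ U : Finset ι, (0:ℝ) ≤ ∏ l ∈ Uᶜ, (ψ l)⁻¹ := fun U =>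
    Finset.prod_nonneg fun l _ => by have := hψ' l; positivity
  have hynn : ∀ U : Finset ι, (0:ℝ) ≤ ∏ l ∈ Uᶜ, (φ l)⁻¹ := fun U =>
    Finset.prod_nonneg fun l _ => by have := hφ' l; positivity
  have hpq : Real.HolderConjugate a⁻¹ b⁻¹ :=
    Real.HolderConjugate.inv_inv ha' hb' hab
  have key : T (a • ψ + b • φ) ≤ (T ψ) ^ a * (T φ) ^ b := by
    have h2 : T (a • ψ + b • φ) ≤
        ∑ U : Finset ι, (r U * ∏ l ∈ Uᶜ, (ψ l)⁻¹) ^ a * (r U * ∏ l ∈ Uᶜ, (φ l)⁻¹) ^ b := by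
      refine Finset.sum_le_sum fun U _ => ?_
      calc r U * ∏ l ∈ Uᶜ, ((a • ψ + b • φ) l)⁻¹
          ≤ r U * ((∏ l ∈ Uᶜ, (ψ l)⁻¹) ^ a * (∏ l ∈ Uᶜ, (φ l)⁻¹) ^ b) :=
            mul_le_mul_of_nonneg_left (step1 U) (hr U)
        _ = (r U * ∏ l ∈ Uᶜ, (ψ l)⁻¹) ^ a * (r U * ∏ l ∈ Uᶜ, (φ l)⁻¹) ^ b := by
            rw [Real.mul_rpow (hr U) (hxnn U), Real.mul_rpow (hr U) (hynn U),
              mul_mul_mul_comm, ← Real.rpow_add' (hr U) (by rw [hab]; norm_num), hab,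
              Real.rpow_one]
    have h3 := Real.inner_le_Lp_mul_Lq_of_nonneg (Finset.univ : Finset (Finset ι))
      hpq (f := fun U => (r U * ∏ l ∈ Uᶜ, (ψ l)⁻¹) ^ a)
      (g := fun U => (r U * ∏ l ∈ Uᶜ, (φ l)⁻¹) ^ b)
      (fun U _ => Real.rpow_nonneg (mul_nonneg (hr U) (hxnn U)) a)
      (fun U _ => Real.rpow_nonneg (mul_nonneg (hr U) (hynn U)) b)
    have hfa : ∀ U : Finset ι, ((r U * ∏ l ∈ Uᶜ, (ψ l)⁻¹) ^ a) ^ a⁻¹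
        = r U * ∏ l ∈ Uᶜ, (ψ l)⁻¹ := fun U =>
      Real.rpow_rpow_inv (mul_nonneg (hr U) (hxnn U)) ha'.ne'
    have hgb : ∀ U : Finset ι, ((r U * ∏ l ∈ Uᶜ, (φ l)⁻¹) ^ b) ^ b⁻¹
        = r U * ∏ l ∈ Uᶜ, (φ l)⁻¹ := fun U =>
      Real.rpow_rpow_inv (mul_nonneg (hr U) (hynn U)) hb'.ne'
    rw [show (1:ℝ) / a⁻¹ = a by rw [one_div, inv_inv],
      show (1:ℝ) / b⁻¹ = b by rw [one_div, inv_inv]] at h3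
    simp only [hfa, hgb] at h3
    exact h2.trans h3
  have hA := hpos _ hz
  have hB := hpos _ hψ'
  have hC := hpos _ hφ'
  calc Real.log (T (a • ψ + b • φ)) ≤ Real.log ((T ψ) ^ a * (T φ) ^ b) := by
        apply Real.log_le_log hA key
    _ = a * Real.log (T ψ) + b * Real.log (T φ) := by
        rw [Real.log_mul (by positivity) (by positivity),
          Real.log_rpow hB, Real.log_rpow hC]

/-- Convexity of the fronthaul constraint set: the set of entrywise-positive
diagonal `Ψ` with `log det(S + Ψ + σ²I) − log det Ψ ≤ ((1−η)/η)·C₀·log 2`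
is convex. -/
theorem stmt17 (L : ℕ) (S : Matrix (Fin L) (Fin L) ℂ) (hS : S.PosSemidef)
    (σ2 : ℝ) (hσ : 0 < σ2) (η : ℝ) (hη0 : 0 < η) (hη1 : η < 1) (C0 : ℝ) (hC0 : 0 < C0) :
    Convex ℝ {ψ : Fin L → ℝ | (∀ l, 0 < ψ l) ∧
      Real.log (S + diagonal (fun i => ((ψ i : ℝ) : ℂ)) +
          (σ2 : ℂ) • (1 : Matrix (Fin L) (Fin L) ℂ)).det.re -
        Real.log (diagonal (fun i => ((ψ i : ℝ) : ℂ))).det.re ≤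
          ((1 - η) / η) * C0 * Real.log 2} := by
  classical
  set c : ℝ := ((1 - η) / η) * C0 * Real.log 2 with hc
  set M : Matrix (Fin L) (Fin L) ℂ := S + (σ2 : ℂ) • (1 : Matrix (Fin L) (Fin L) ℂ) with hMdef
  have hMpd : M.PosDef := by
    refine Matrix.PosDef.posSemidef_add hS ?_
    have h1 : (σ2 : ℂ) • (1 : Matrix (Fin L) (Fin L) ℂ) = diagonal (fun _ => (σ2 : ℂ)) := by
      ext i j
      by_cases h : i = j <;>
        simp [h, Matrix.one_apply, Matrix.diagonal_apply, Matrix.smul_apply]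
    rw [h1]
    refine posDef_diagonal_iff.mpr fun i => ?_
    rw [Complex.lt_def]
    simp [hσ]
  obtain ⟨r, hr0, hrdet⟩ : ∃ r : Finset (Fin L) → ℝ, (∀ U, 0 ≤ r U) ∧
      ∀ U : Finset (Fin L), (Matrix.of (U.piecewise (1 : Matrix (Fin L) (Fin L) ℂ) M)).det
        = (r U : ℂ) := by
    choose r h1 h2 using fun U => my_coef_nonneg hMpd.posSemidef U
    exact ⟨r, h1, h2⟩
  set T : (Fin L → ℝ) → ℝ := fun ψ => ∑ U : Finset (Fin L), r U * ∏ l ∈ Uᶜ, (ψ l)⁻¹ with hT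
  -- determinant formula
  have hre : ∀ ψ : Fin L → ℝ,
      (M + diagonal (fun i => ((ψ i : ℝ) : ℂ))).det.re
        = ∑ U : Finset (Fin L), (∏ l ∈ U, ψ l) * r U := by
    intro ψ
    rw [my_det_add_diagonal]
    have : (∑ U : Finset (Fin L), (∏ l ∈ U, ((ψ l : ℝ) : ℂ)) *
        (Matrix.of (U.piecewise (1 : Matrix (Fin L) (Fin L) ℂ) M)).det)
        = ((∑ U : Finset (Fin L), (∏ l ∈ U, ψ l) * r U : ℝ) : ℂ) := by
      push_cast
      exact Finset.sum_congr rfl fun U _ => by rw [hrdet U]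
    rw [this, Complex.ofReal_re]
  -- relation between the determinant and T
  have hrel : ∀ ψ : Fin L → ℝ, (∀ l, 0 < ψ l) →
      (M + diagonal (fun i => ((ψ i : ℝ) : ℂ))).det.re = T ψ * ∏ l, ψ l := by
    intro ψ hψ
    rw [hre ψ, hT]
    rw [Finset.sum_mul]
    refine Finset.sum_congr rfl fun U _ => ?_
    have hsplit : ∏ l, ψ l = (∏ l ∈ U, ψ l) * ∏ l ∈ Uᶜ, ψ l :=
      (Finset.prod_mul_prod_compl U ψ).symm
    have hcne : (∏ l ∈ Uᶜ, ψ l) ≠ 0 :=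
      ne_of_gt (Finset.prod_pos fun l _ => hψ l)
    rw [hsplit, Finset.prod_inv_distrib]
    field_simp
  -- positivity of T
  have hTpos : ∀ ψ : Fin L → ℝ, (∀ l, 0 < ψ l) → 0 < T ψ := by
    intro ψ hψ
    have hpd : (M + diagonal (fun i => ((ψ i : ℝ) : ℂ))).PosDef := by
      apply hMpd.add_posSemidef
      refine posSemidef_diagonal_iff.mpr fun i => ?_
      rw [Complex.le_def]
      simp [(hψ i).le]
    have hdetpos : 0 < (M + diagonal (fun i => ((ψ i : ℝ) : ℂ))).det.re :=
      (Complex.lt_def.mp hpd.det_pos).1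
    rw [hrel ψ hψ] at hdetpos
    have hP : 0 < ∏ l, ψ l := Finset.prod_pos fun l _ => hψ l
    by_contra h
    push_neg at h
    exact absurd hdetpos (not_lt.mpr (mul_nonpos_of_nonpos_of_nonneg h hP.le))
  have hconvexOn := my_core_convexOn r hr0 hTpos
  have := hconvexOn.convex_le c
  convert this using 1
  ext ψ
  simp only [Set.mem_setOf_eq, Set.sep_setOf]
  constructor
  · rintro ⟨hψ, hineq⟩
    refine ⟨hψ, ?_⟩
    have hrw : S + diagonal (fun i => ((ψ i : ℝ) : ℂ)) +
        (σ2 : ℂ) • (1 : Matrix (Fin L) (Fin L) ℂ)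
        = M + diagonal (fun i => ((ψ i : ℝ) : ℂ)) := by
      rw [hMdef]; abel
    rw [hrw, hrel ψ hψ] at hineq
    have hdiag : (diagonal (fun i => ((ψ i : ℝ) : ℂ))).det.re = ∏ l, ψ l := by
      rw [det_diagonal]
      have : (∏ i, ((ψ i : ℝ) : ℂ)) = ((∏ i, ψ i : ℝ) : ℂ) := by push_cast; rfl
      rw [this, Complex.ofReal_re]
    rw [hdiag] at hineq
    have hP : 0 < ∏ l, ψ l := Finset.prod_pos fun l _ => hψ l
    rwa [Real.log_mul (hTpos ψ hψ).ne' hP.ne', add_sub_cancel_right] at hineq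
  · rintro ⟨hψ, hineq⟩
    refine ⟨hψ, ?_⟩
    have hrw : S + diagonal (fun i => ((ψ i : ℝ) : ℂ)) +
        (σ2 : ℂ) • (1 : Matrix (Fin L) (Fin L) ℂ)
        = M + diagonal (fun i => ((ψ i : ℝ) : ℂ)) := by
      rw [hMdef]; abel
    rw [hrw, hrel ψ hψ]
    have hdiag : (diagonal (fun i => ((ψ i : ℝ) : ℂ))).det.re = ∏ l, ψ l := by
      rw [det_diagonal]
      have : (∏ i, ((ψ i : ℝ) : ℂ)) = ((∏ i, ψ i : ℝ) : ℂ) := by push_cast; rfl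
      rw [this, Complex.ofReal_re]
    rw [hdiag]
    have hP : 0 < ∏ l, ψ l := Finset.prod_pos fun l _ => hψ l
    rwa [Real.log_mul (hTpos ψ hψ).ne' hP.ne', add_sub_cancel_right]
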